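/- For every real number a with 0 < a ≤ 1, one has ∫₀¹ log(1/r)/(r + a) dr ≤ 1 + log(1/a) + (1/2)·log²(1/a). -/

import Mathlib

open MeasureTheory

open Set intervalIntegral in
/-- Auxiliary: `∫ x in 0..a, -Real.log x = a - a * Real.log a` for `0 < a ≤ 1`. -/
lemma aux_integral_neg_log (a : ℝ) (ha0 : 0 < a) (ha1 : a ≤ 1) :
    ∫ x in (0:ℝ)..a, -Real.log x = a - a * Real.log a := by
  have hderiv : ∀ x ∈ Ioo (0:ℝ) a, HasDerivAt (fun x => x - x * Real.log x) (-Real.log x) x := by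
    intro x hx
    have h := (hasDerivAt_id x).sub (Real.hasDerivAt_mul_log hx.1.ne')
    refine h.congr_deriv ?_
    ring
  have hcont : Continuous (fun x : ℝ => x - x * Real.log x) :=
    continuous_id.sub Real.continuous_mul_log
  have hint : IntervalIntegrable (fun x => -Real.log x) volume 0 a := by
    apply intervalIntegrable_deriv_of_nonneg (g := fun x => x - x * Real.log x)
    · exact hcont.continuousOn
    · rwa [min_eq_left ha0.le, max_eq_right ha0.le]
    · intro x hx
      rw [min_eq_left ha0.le, max_eq_right ha0.le] at hx
      simp only [Left.nonneg_neg_iff]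
      exact Real.log_nonpos hx.1.le (hx.2.le.trans ha1)
  have := integral_eq_sub_of_hasDerivAt_of_tendsto (f := fun x => x - x * Real.log x)
    (f' := fun x => -Real.log x) ha0 hderiv hint
    (fa := 0) (fb := a - a * Real.log a) ?_ ?_
  · rw [this]; ring
  · have : Filter.Tendsto (fun x : ℝ => x - x * Real.log x) (nhds 0) (nhds 0) := by
      have h0 := hcont.tendsto 0
      simpa using h0
    exact this.mono_left nhdsWithin_le_nhds
  · exact (hcont.tendsto a).mono_left nhdsWithin_le_nhds

open Set intervalIntegral in
/-- Auxiliary: `∫ x in a..1, -Real.log x / x = (Real.log a)^2 / 2` for `0 < a ≤ 1`. -/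
lemma aux_integral_neg_log_div (a : ℝ) (ha0 : 0 < a) (ha1 : a ≤ 1) :
    ∫ x in a..(1:ℝ), -Real.log x / x = (Real.log a) ^ 2 / 2 := by
  have hderiv : ∀ x ∈ uIcc a 1, HasDerivAt (fun x => -(Real.log x) ^ 2 / 2)
      (-Real.log x / x) x := by
    intro x hx
    rw [uIcc_of_le ha1] at hx
    have hx0 : 0 < x := lt_of_lt_of_le ha0 hx.1
    have h := (((Real.hasDerivAt_log hx0.ne').pow 2).neg).div_const 2
    refine h.congr_deriv ?_
    field_simp
    ring
  have hint : IntervalIntegrable (fun x => -Real.log x / x) volume a 1 := by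
    apply ContinuousOn.intervalIntegrable
    intro x hx
    rw [uIcc_of_le ha1] at hx
    have hx0 : 0 < x := lt_of_lt_of_le ha0 hx.1
    exact ((Real.continuousAt_log hx0.ne').neg.div continuousAt_id hx0.ne').continuousWithinAt
  rw [integral_eq_sub_of_hasDerivAt hderiv hint]
  simp
  ring

theorem integral_log_div_add_le (a : ℝ) (ha0 : 0 < a) (ha1 : a ≤ 1) :
    ∫ r in Set.Ioo (0 : ℝ) 1, Real.log (1 / r) / (r + a) ≤
      1 + Real.log (1 / a) + (1 / 2) * (Real.log (1 / a)) ^ 2 := by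
  have hlog : Real.log (1 / a) = -Real.log a := by rw [one_div, Real.log_inv]
  set f : ℝ → ℝ := fun r => Real.log (1 / r) / (r + a) with hf_def
  by_cases hf : IntegrableOn f (Set.Ioo 0 1) volume
  swap
  · rw [integral_undef hf]
    have h1 : 0 ≤ Real.log (1 / a) := Real.log_nonneg (one_le_one_div ha0 ha1)
    nlinarith [sq_nonneg (Real.log (1 / a))]
  -- split the domain
  have hsplit : Set.Ioo (0:ℝ) 1 = Set.Ioo 0 a ∪ Set.Ico a 1 := by
    ext x
    simp only [Set.mem_Ioo, Set.mem_union, Set.mem_Ico]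
    constructor
    · rintro ⟨h1, h2⟩
      rcases lt_or_ge x a with h | h
      · exact Or.inl ⟨h1, h⟩
      · exact Or.inr ⟨h, h2⟩
    · rintro (⟨h1, h2⟩ | ⟨h1, h2⟩)
      · exact ⟨h1, lt_of_lt_of_le h2 ha1⟩
      · exact ⟨lt_of_lt_of_le ha0 h1, h2⟩
  have hdisj : Disjoint (Set.Ioo (0:ℝ) a) (Set.Ico a 1) := by
    rw [Set.disjoint_left]
    rintro x ⟨_, h2⟩ ⟨h3, _⟩
    exact absurd h3 (not_le.mpr h2)
  have hf1 : IntegrableOn f (Set.Ioo 0 a) volume := by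
    apply hf.mono_set; rw [hsplit]; exact Set.subset_union_left
  have hf2 : IntegrableOn f (Set.Ico a 1) volume := by
    apply hf.mono_set; rw [hsplit]; exact Set.subset_union_right
  rw [hsplit, setIntegral_union hdisj measurableSet_Ico hf1 hf2]
  -- first piece
  have key1 : ∫ r in Set.Ioo (0:ℝ) a, f r ≤ 1 + Real.log (1 / a) := by
    have hintg : IntegrableOn (fun r => -Real.log r / a) (Set.Ioo 0 a) volume := by
      have h1 : IntegrableOn (fun r => -Real.log r) (Set.Ioc 0 a) volume := by
        have := (intervalIntegrable_iff_integrableOn_Ioc_of_le ha0.le).mp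
          (by
            apply intervalIntegral.intervalIntegrable_deriv_of_nonneg
              (g := fun x : ℝ => x - x * Real.log x) (g' := fun x : ℝ => -Real.log x)
            · exact (continuous_id.sub Real.continuous_mul_log).continuousOn
            · intro x hx
              rw [min_eq_left ha0.le, max_eq_right ha0.le] at hx
              have h := (hasDerivAt_id x).sub (Real.hasDerivAt_mul_log hx.1.ne')
              refine h.congr_deriv ?_
              ring
            · intro x hx
              rw [min_eq_left ha0.le, max_eq_right ha0.le] at hx
              simp only [Left.nonneg_neg_iff]
              exact Real.log_nonpos hx.1.le (hx.2.le.trans ha1))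
        exact this
      exact IntegrableOn.mono_set (h1.div_const a) Set.Ioo_subset_Ioc_self
    have hmono : ∫ r in Set.Ioo (0:ℝ) a, f r ≤ ∫ r in Set.Ioo (0:ℝ) a, -Real.log r / a := by
      apply setIntegral_mono_on hf1 hintg measurableSet_Ioo
      intro x hx
      have hx0 : 0 < x := hx.1
      have hxa : x < a := hx.2
      have hlx : Real.log (1 / x) = -Real.log x := by rw [one_div, Real.log_inv]
      rw [hf_def]
      simp only
      rw [hlx]
      apply div_le_div_of_nonneg_left _ ha0 (by linarith)
      simp only [Left.nonneg_neg_iff]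
      exact Real.log_nonpos hx0.le (hxa.le.trans ha1)
    have hcomp : ∫ r in Set.Ioo (0:ℝ) a, -Real.log r / a = 1 + Real.log (1 / a) := by
      have h1 : ∫ r in Set.Ioo (0:ℝ) a, -Real.log r / a
          = (∫ r in Set.Ioo (0:ℝ) a, -Real.log r) / a := by
        rw [integral_div]
      rw [h1, ← integral_Ioc_eq_integral_Ioo,
        ← intervalIntegral.integral_of_le ha0.le, aux_integral_neg_log a ha0 ha1, hlog]
      field_simp
      ring
    linarith
  -- second piece
  have key2 : ∫ r in Set.Ico a (1:ℝ), f r ≤ (1 / 2) * (Real.log (1 / a)) ^ 2 := by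
    have hcont2 : IntegrableOn (fun r => -Real.log r / r) (Set.Ico a 1) volume := by
      have : IntegrableOn (fun r => -Real.log r / r) (Set.Icc a 1) volume := by
        apply ContinuousOn.integrableOn_Icc
        intro x hx
        have hx0 : 0 < x := lt_of_lt_of_le ha0 hx.1
        exact ((Real.continuousAt_log hx0.ne').neg.div continuousAt_id hx0.ne').continuousWithinAt
      exact this.mono_set Set.Ico_subset_Icc_self
    have hmono : ∫ r in Set.Ico a (1:ℝ), f r ≤ ∫ r in Set.Ico a (1:ℝ), -Real.log r / r := by
      apply setIntegral_mono_on hf2 hcont2 measurableSet_Ico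
      intro x hx
      have hx0 : 0 < x := lt_of_lt_of_le ha0 hx.1
      have hlx : Real.log (1 / x) = -Real.log x := by rw [one_div, Real.log_inv]
      rw [hf_def]
      simp only
      rw [hlx]
      apply div_le_div_of_nonneg_left _ hx0 (by linarith)
      simp only [Left.nonneg_neg_iff]
      exact Real.log_nonpos hx0.le hx.2.le
    have hcomp : ∫ r in Set.Ico a (1:ℝ), -Real.log r / r = (1 / 2) * (Real.log (1 / a)) ^ 2 := by
      rw [integral_Ico_eq_integral_Ioo, ← integral_Ioc_eq_integral_Ioo,
        ← intervalIntegral.integral_of_le ha1, aux_integral_neg_log_div a ha0 ha1, hlog]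
      ring
    linarith
  linarith
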